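/- Let X = ℓ₁ⁿ, Y a real normed space, Z a closed subspace of Y, and T : X → Y a bounded linear operator such that there is an extreme point x₀ of B_X with ‖Tx₀‖ = ‖T‖ and a norm-one functional y* ∈ Z^⊥ with y*(Tx₀) = ‖Tx₀‖. Then d(T, L(X,Z)) = sup_{x ∈ S_X} d(Tx, Z) = d(Tx₀, Z) = ‖T‖, with the supremum attained at the extreme point x₀. -/

import Mathlib

open NormedSpace

theorem stmt_18
    {n : ℕ} {Y : Type*} [NormedAddCommGroup Y] [NormedSpace ℝ Y]
    (Z : Subspace ℝ Y) (hZ : IsClosed (Z : Set Y))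
    (T : PiLp 1 (fun _ : Fin n => ℝ) →L[ℝ] Y)
    (x₀ : PiLp 1 (fun _ : Fin n => ℝ))
    (hx₀ : x₀ ∈ Set.extremePoints ℝ (Metric.closedBall (0 : PiLp 1 (fun _ : Fin n => ℝ)) 1))
    (hTx₀ : ‖T x₀‖ = ‖T‖)
    (g : StrongDual ℝ Y) (hg : ‖g‖ = 1) (hgZ : ∀ z ∈ Z, g z = 0)
    (hgy : g (T x₀) = ‖T x₀‖) :
    sInf {r : ℝ | ∃ S : PiLp 1 (fun _ : Fin n => ℝ) →L[ℝ] Y,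
        (∀ x, S x ∈ Z) ∧ r = ‖T - S‖} = ‖T‖ ∧
    sSup {r : ℝ | ∃ x : PiLp 1 (fun _ : Fin n => ℝ),
        ‖x‖ = 1 ∧ r = Metric.infDist (T x) (Z : Set Y)} = ‖T‖ ∧
    Metric.infDist (T x₀) (Z : Set Y) = ‖T‖ := by
  have hZ0 : (0 : Y) ∈ (Z : Set Y) := Z.zero_mem
  have hne : (Z : Set Y).Nonempty := ⟨0, hZ0⟩
  have hx0le : ‖x₀‖ ≤ 1 := by
    have := hx₀.1
    rwa [Metric.mem_closedBall, dist_zero_right] at this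
  -- Key: infDist (T x₀) Z = ‖T‖
  have hkey : Metric.infDist (T x₀) (Z : Set Y) = ‖T‖ := by
    refine le_antisymm ?_ ?_
    · calc Metric.infDist (T x₀) (Z : Set Y) ≤ dist (T x₀) 0 :=
            Metric.infDist_le_dist_of_mem hZ0
        _ = ‖T x₀‖ := by rw [dist_zero_right]
        _ = ‖T‖ := hTx₀
    · rw [← hTx₀]
      refine le_of_not_gt fun hlt => ?_
      obtain ⟨y, hy, hdy⟩ := (Metric.infDist_lt_iff hne).1 hlt
      refine absurd hdy (not_lt.mpr ?_)
      have h1 : g (T x₀ - y) = ‖T x₀‖ := by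
        rw [map_sub, hgZ y hy, hgy, sub_zero]
      calc ‖T x₀‖ = g (T x₀ - y) := h1.symm
        _ ≤ ‖g‖ * ‖T x₀ - y‖ := le_trans (le_abs_self _) (g.le_opNorm _)
        _ = ‖T x₀ - y‖ := by rw [hg, one_mul]
        _ = dist (T x₀) y := (dist_eq_norm _ _).symm
  -- sInf part
  have hInf : sInf {r : ℝ | ∃ S : PiLp 1 (fun _ : Fin n => ℝ) →L[ℝ] Y,
      (∀ x, S x ∈ Z) ∧ r = ‖T - S‖} = ‖T‖ := by
    have hmem : ‖T‖ ∈ {r : ℝ | ∃ S : PiLp 1 (fun _ : Fin n => ℝ) →L[ℝ] Y,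
        (∀ x, S x ∈ Z) ∧ r = ‖T - S‖} :=
      ⟨0, fun x => by simp, by rw [sub_zero]⟩
    have hlb : ∀ r ∈ {r : ℝ | ∃ S : PiLp 1 (fun _ : Fin n => ℝ) →L[ℝ] Y,
        (∀ x, S x ∈ Z) ∧ r = ‖T - S‖}, ‖T‖ ≤ r := by
      rintro r ⟨S, hS, rfl⟩
      calc ‖T‖ = Metric.infDist (T x₀) (Z : Set Y) := hkey.symm
        _ ≤ dist (T x₀) (S x₀) := Metric.infDist_le_dist_of_mem (hS x₀)
        _ = ‖(T - S) x₀‖ := by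
            rw [dist_eq_norm, ContinuousLinearMap.sub_apply]
        _ ≤ ‖T - S‖ * ‖x₀‖ := (T - S).le_opNorm _
        _ ≤ ‖T - S‖ * 1 := by
            exact mul_le_mul_of_nonneg_left hx0le (norm_nonneg _)
        _ = ‖T - S‖ := mul_one _
    exact le_antisymm (csInf_le ⟨‖T‖, hlb⟩ hmem) (le_csInf ⟨_, hmem⟩ hlb)
  refine ⟨hInf, ?_, hkey⟩
  -- sSup part
  have hub : ∀ r ∈ {r : ℝ | ∃ x : PiLp 1 (fun _ : Fin n => ℝ),
      ‖x‖ = 1 ∧ r = Metric.infDist (T x) (Z : Set Y)}, r ≤ ‖T‖ := by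
    rintro r ⟨x, hx, rfl⟩
    calc Metric.infDist (T x) (Z : Set Y) ≤ dist (T x) 0 :=
          Metric.infDist_le_dist_of_mem hZ0
      _ = ‖T x‖ := by rw [dist_zero_right]
      _ ≤ ‖T‖ * ‖x‖ := T.le_opNorm _
      _ = ‖T‖ := by rw [hx, mul_one]
  rcases Nat.eq_zero_or_pos n with hn | hn
  · -- degenerate case: the domain is trivial
    subst hn
    haveI : Subsingleton (PiLp 1 (fun _ : Fin 0 => ℝ)) := by
      refine ⟨fun a b => (WithLp.equiv 1 _).injective (funext fun i => Fin.elim0 i)⟩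
    have hT0 : ‖T‖ = 0 := by
      rw [← hTx₀]
      have : x₀ = 0 := Subsingleton.elim _ _
      rw [this, map_zero, norm_zero]
    have hempty : {r : ℝ | ∃ x : PiLp 1 (fun _ : Fin 0 => ℝ),
        ‖x‖ = 1 ∧ r = Metric.infDist (T x) (Z : Set Y)} = ∅ := by
      ext r
      simp only [Set.mem_setOf_eq, Set.mem_empty_iff_false, iff_false]
      rintro ⟨x, hx, -⟩
      have : x = 0 := Subsingleton.elim _ _
      rw [this, norm_zero] at hx
      exact one_ne_zero hx.symm
    rw [hempty, Real.sSup_empty, hT0]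
  · -- nontrivial case: extreme points of the ball have norm 1
    haveI : NeZero n := ⟨hn.ne'⟩
    haveI : Nontrivial (PiLp 1 (fun _ : Fin n => ℝ)) :=
      inferInstance
    have hx0norm : ‖x₀‖ = 1 := by
      by_contra hne1
      have hlt : ‖x₀‖ < 1 := lt_of_le_of_ne hx0le hne1
      rcases eq_or_ne x₀ 0 with h0 | h0
      · obtain ⟨u, hu⟩ := exists_norm_eq (PiLp 1 (fun _ : Fin n => ℝ)) (zero_le_one' ℝ)
        have humem : u ∈ Metric.closedBall (0 : PiLp 1 (fun _ : Fin n => ℝ)) 1 := by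
          rw [Metric.mem_closedBall, dist_zero_right, hu]
        have hnumem : -u ∈ Metric.closedBall (0 : PiLp 1 (fun _ : Fin n => ℝ)) 1 := by
          rw [Metric.mem_closedBall, dist_zero_right, norm_neg, hu]
        have hseg : x₀ ∈ openSegment ℝ u (-u) := by
          refine ⟨1/2, 1/2, by norm_num, by norm_num, by norm_num, ?_⟩
          rw [h0, smul_neg, add_neg_cancel]
        have := hx₀.2 humem hnumem hseg
        rw [this, h0, norm_zero] at hu
        exact one_ne_zero hu.symm
      · set c : ℝ := ‖x₀‖ with hc
        have hcpos : 0 < c := norm_pos_iff.mpr h0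
        set u : PiLp 1 (fun _ : Fin n => ℝ) := c⁻¹ • x₀ with hudef
        have hunorm : ‖u‖ = 1 := by
          rw [hudef, norm_smul, norm_inv, Real.norm_eq_abs, abs_of_pos hcpos]
          field_simp
          exact hc.symm
        have humem : u ∈ Metric.closedBall (0 : PiLp 1 (fun _ : Fin n => ℝ)) 1 := by
          rw [Metric.mem_closedBall, dist_zero_right, hunorm]
        have h0mem : (0 : PiLp 1 (fun _ : Fin n => ℝ)) ∈
            Metric.closedBall (0 : PiLp 1 (fun _ : Fin n => ℝ)) 1 := by
          simp
        have hseg : x₀ ∈ openSegment ℝ (0 : PiLp 1 (fun _ : Fin n => ℝ)) u := by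
          refine ⟨1 - c, c, by linarith, hcpos, by ring, ?_⟩
          rw [smul_zero, zero_add, hudef, smul_smul,
            mul_inv_cancel₀ hcpos.ne', one_smul]
        have := hx₀.2 h0mem humem hseg
        exact h0 this.symm
    have hmem : ‖T‖ ∈ {r : ℝ | ∃ x : PiLp 1 (fun _ : Fin n => ℝ),
        ‖x‖ = 1 ∧ r = Metric.infDist (T x) (Z : Set Y)} :=
      ⟨x₀, hx0norm, hkey.symm⟩
    exact le_antisymm (csSup_le ⟨_, hmem⟩ hub) (le_csSup ⟨‖T‖, hub⟩ hmem)
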